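/- Combining the previous reductions: the optimal value of the dynamic beam routing problem (P2) with gains H_{k,t} ≥ 0 (not all H_{k,max} zero, where H_{k,max} := max_t H_{k,t} > 0 for all k) equals 1 / (∑_{k=1}^K H_{k,max}^{-1}). -/

import Mathlib

/-- Closed form of the optimal value of the dynamic beam routing problem (P2):
it equals `1 / ∑ k, (max_t H k t)⁻¹` when every user's best gain is positive. -/
theorem stmt12 (K T : ℕ) (hK : 0 < K) (hT : 0 < T)
    (H : Fin K → Fin T → ℝ) (hH : ∀ k t, 0 ≤ H k t)
    (hmax : ∀ k, 0 < ⨆ t, H k t) :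
    IsGreatest {v : ℝ | ∃ (τ : Fin T → ℝ) (ρ : Fin K → Fin T → ℝ),
        (∀ t, 0 ≤ τ t) ∧ (∑ t, τ t) = 1 ∧
        (∀ k t, 0 ≤ ρ k t) ∧ (∀ t, (∑ k, ρ k t) = 1) ∧
        v = ⨅ k, ∑ t, τ t * ρ k t * H k t}
      (1 / ∑ k, (⨆ t, H k t)⁻¹) := by
  haveI : NeZero K := ⟨hK.ne'⟩
  haveI : NeZero T := ⟨hT.ne'⟩
  set M : Fin K → ℝ := fun k => ⨆ t, H k t with hM
  have hMt : ∀ k t, H k t ≤ M k := fun k t =>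
    le_ciSup (Set.Finite.bddAbove (Set.finite_range _)) t
  have hMpos : ∀ k, 0 < M k := hmax
  set S : ℝ := ∑ k, (M k)⁻¹ with hSdef
  have hSpos : 0 < S := Finset.sum_pos
    (fun k _ => inv_pos.mpr (hMpos k)) ⟨0, Finset.mem_univ _⟩
  -- best slot for each user
  have hbest : ∀ k, ∃ t0, ∀ t, H k t ≤ H k t0 := fun k => Finite.exists_max _
  choose tk htk using hbest
  have hMeq : ∀ k, M k = H k (tk k) := fun k =>
    le_antisymm (ciSup_le (htk k)) (hMt k (tk k))
  constructor
  · -- membership: construct the optimal allocation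
    set η : Fin K → Fin T → ℝ := fun k t => if tk k = t then (M k)⁻¹ / S else 0 with hη
    have hηnn : ∀ k t, 0 ≤ η k t := by
      intro k t
      simp only [hη]
      split
      · exact div_nonneg (inv_nonneg.mpr (hMpos k).le) hSpos.le
      · exact le_rfl
    set τ : Fin T → ℝ := fun t => ∑ k, η k t with hτ
    have hτnn : ∀ t, 0 ≤ τ t := fun t => Finset.sum_nonneg fun k _ => hηnn k t
    have hηsum : ∀ k, (∑ t, η k t) = (M k)⁻¹ / S := by
      intro k
      simp [hη, Finset.sum_ite_eq]
    have hτsum : (∑ t, τ t) = 1 := by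
      rw [Finset.sum_comm (γ := Fin T) (f := fun t k => η k t)]
      simp only [hηsum]
      rw [← Finset.sum_div]
      exact div_self hSpos.ne'
    set ρ : Fin K → Fin T → ℝ := fun k t =>
      if τ t = 0 then (if k = ⟨0, hK⟩ then 1 else 0) else η k t / τ t with hρ
    have hρnn : ∀ k t, 0 ≤ ρ k t := by
      intro k t
      simp only [hρ]
      split
      · split <;> norm_num
      · exact div_nonneg (hηnn k t) (hτnn t)
    have hρsum : ∀ t, (∑ k, ρ k t) = 1 := by
      intro t
      by_cases h : τ t = 0
      · simp [hρ, h]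
        rw [Finset.sum_eq_single (0 : Fin K)] <;> simp +contextual
      · simp only [hρ, if_neg h]
        rw [← Finset.sum_div]
        exact div_self h
    have hmul : ∀ k t, τ t * ρ k t = η k t := by
      intro k t
      by_cases h : τ t = 0
      · have hη0 : η k t = 0 := by
          have hle : η k t ≤ τ t := Finset.single_le_sum
            (fun k _ => hηnn k t) (Finset.mem_univ k)
          linarith [hηnn k t]
        simp [h, hη0]
      · simp only [hρ, if_neg h]
        field_simp
    refine ⟨τ, ρ, hτnn, hτsum, hρnn, hρsum, ?_⟩
    have hval : ∀ k, (∑ t, τ t * ρ k t * H k t) = 1 / S := by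
      intro k
      have : ∀ t, τ t * ρ k t * H k t = η k t * H k t := fun t => by rw [hmul]
      rw [Finset.sum_congr rfl fun t _ => this t]
      have : ∀ t, η k t * H k t = if tk k = t then (M k)⁻¹ / S * H k t else 0 := by
        intro t; simp only [hη]; split <;> simp
      rw [Finset.sum_congr rfl fun t _ => this t, Finset.sum_ite_eq]
      simp only [Finset.mem_univ, if_true]
      rw [← hMeq k, div_mul_eq_mul_div, inv_mul_cancel₀ (hMpos k).ne']
    have : (fun k => ∑ t, τ t * ρ k t * H k t) = fun _ => 1 / S := funext hval
    rw [this]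
    exact (ciInf_const).symm
  · -- upper bound
    rintro v ⟨τ, ρ, hτnn, hτsum, hρnn, hρsum, hv⟩
    set f : Fin K → ℝ := fun k => ∑ t, τ t * ρ k t * H k t with hf
    have hvle : ∀ k, v ≤ f k := by
      intro k
      rw [hv]
      exact ciInf_le (Set.Finite.bddBelow (Set.finite_range _)) k
    have hkey : ∀ k, (M k)⁻¹ * v ≤ ∑ t, τ t * ρ k t := by
      intro k
      have h1 : f k ≤ M k * ∑ t, τ t * ρ k t := by
        rw [Finset.mul_sum]
        refine Finset.sum_le_sum fun t _ => ?_
        have := mul_le_mul_of_nonneg_left (hMt k t)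
          (mul_nonneg (hτnn t) (hρnn k t))
        linarith [this]
      have h2 : (M k)⁻¹ * f k ≤ ∑ t, τ t * ρ k t := by
        have := mul_le_mul_of_nonneg_left h1 (inv_nonneg.mpr (hMpos k).le)
        rwa [← mul_assoc, inv_mul_cancel₀ (hMpos k).ne', one_mul] at this
      calc (M k)⁻¹ * v ≤ (M k)⁻¹ * f k :=
            mul_le_mul_of_nonneg_left (hvle k) (inv_nonneg.mpr (hMpos k).le)
        _ ≤ _ := h2
    have hsum : S * v ≤ 1 := by
      have h3 : (∑ k, (M k)⁻¹ * v) ≤ ∑ k, ∑ t, τ t * ρ k t :=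
        Finset.sum_le_sum fun k _ => hkey k
      have h4 : (∑ k, ∑ t, τ t * ρ k t) = 1 := by
        rw [Finset.sum_comm]
        calc (∑ t, ∑ k, τ t * ρ k t) = ∑ t, τ t * ∑ k, ρ k t := by
              refine Finset.sum_congr rfl fun t _ => ?_
              rw [Finset.mul_sum]
          _ = ∑ t, τ t := by
              refine Finset.sum_congr rfl fun t _ => ?_
              rw [hρsum t, mul_one]
          _ = 1 := hτsum
      rw [← Finset.sum_mul] at h3
      rw [h4] at h3
      exact h3
    rw [← le_div_iff₀' hSpos] at hsum
    simpa using hsum
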